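/- arXiv:2002.09959 — 2 statements merged into one kernel-verified Lean document; each statement's English description precedes it below -/
import Mathlib

section
/- Assume f_y ≡ 0, and let H : Σ → ℝ be smooth with H_y ≡ 0 (H = H(x,p)) and ξ₁(H) = 2(H_x + f H_p) nowhere zero. Set H₁ = −p/2. Then the vector field v = ξ₁(H) ξ₂ admits a compatible bi-Hamiltonian structure: (i) v = ξ₃ × ∇H, where ∇H is the g-gradient of H and × is the cross product of g with volume form vol_g; (ii) v = (ξ₁(H) ξ₁) × ∇H₁, with ∇H₁ = −f ξ₁ − ξ₃; (iii) the corresponding Poisson 1-forms η³ and η = ξ₁(H) η¹ satisfy η³ ∧ dη³ = 0, η ∧ dη = 0, and the compatibility condition (η³ + η) ∧ d(η³ + η) = 0. -/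
/-!
Concrete model of the geometry of a second order ODE  y'' = f(x, y, y')
on Σ = ℝ³ with coordinates (x, y, p):

* a vector field is given by its components w.r.t. (∂x, ∂y, ∂p);
* a 1-form by its components w.r.t. (dx, dy, dp);
* a 2-form by its components w.r.t. (dy∧dp, dp∧dx, dx∧dy);
* a 3-form by its coefficient w.r.t. dx∧dy∧dp.
-/

noncomputable section

/-- Points of Σ = ℝ³ with coordinates (x, y, p). -/
abbrev Pt : Type := ℝ × ℝ × ℝ

/-- Componentwise dot product of triples. -/
def dot (a b : Pt) : ℝ := a.1 * b.1 + a.2.1 * b.2.1 + a.2.2 * b.2.2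

/-- Componentwise cross product of triples. -/
def cross (a b : Pt) : Pt :=
  (a.2.1 * b.2.2 - a.2.2 * b.2.1,
   a.2.2 * b.1 - a.1 * b.2.2,
   a.1 * b.2.1 - a.2.1 * b.1)

/-- Partial derivative ∂/∂x. -/
def pdx (F : Pt → ℝ) (q : Pt) : ℝ := fderiv ℝ F q (1, 0, 0)
/-- Partial derivative ∂/∂y. -/
def pdy (F : Pt → ℝ) (q : Pt) : ℝ := fderiv ℝ F q (0, 1, 0)
/-- Partial derivative ∂/∂p. -/
def pdp (F : Pt → ℝ) (q : Pt) : ℝ := fderiv ℝ F q (0, 0, 1)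

/-- A 1-form: components w.r.t. (dx, dy, dp). -/
abbrev Form1 : Type := Pt → Pt
/-- A 2-form: components w.r.t. (dy∧dp, dp∧dx, dx∧dy). -/
abbrev Form2 : Type := Pt → Pt
/-- A 3-form: coefficient w.r.t. dx∧dy∧dp. -/
abbrev Form3 : Type := Pt → ℝ
/-- A vector field: components w.r.t. (∂x, ∂y, ∂p). -/
abbrev VF : Type := Pt → Pt

/-- Smoothness (C^∞) of a real function on Σ. -/
def SmoothFn (F : Pt → ℝ) : Prop := ContDiff ℝ (⊤ : ℕ∞) F
/-- Smoothness (C^∞) of a vector field on Σ. -/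
def SmoothVF (X : VF) : Prop := ContDiff ℝ (⊤ : ℕ∞) X
/-- Smoothness (C^∞) of a 1-form on Σ. -/
def SmoothForm1 (ω : Form1) : Prop := ContDiff ℝ (⊤ : ℕ∞) ω

/-- Exterior derivative of a function. -/
def dFun (F : Pt → ℝ) : Form1 := fun q => (pdx F q, pdy F q, pdp F q)

/-- Exterior derivative of a 1-form (the "curl", in the bases above). -/
def d1 (ω : Form1) : Form2 := fun q =>
  (pdy (fun r => (ω r).2.2) q - pdp (fun r => (ω r).2.1) q,
   pdp (fun r => (ω r).1) q - pdx (fun r => (ω r).2.2) q,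
   pdx (fun r => (ω r).2.1) q - pdy (fun r => (ω r).1) q)

/-- Wedge product of two 1-forms. -/
def w11 (ω τ : Form1) : Form2 := fun q => cross (ω q) (τ q)

/-- Wedge product of a 1-form and a 2-form. -/
def w12 (ω : Form1) (σ : Form2) : Form3 := fun q => dot (ω q) (σ q)

/-- Evaluation of a 1-form on a vector field. -/
def ev1 (ω : Form1) (X : VF) : Pt → ℝ := fun q => dot (ω q) (X q)

/-- Evaluation of a 2-form on a pair of vector fields. -/
def ev2 (σ : Form2) (X Y : VF) : Pt → ℝ := fun q => dot (σ q) (cross (X q) (Y q))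

/-- Lie bracket of vector fields: [X,Y]^i = X^j ∂_j Y^i − Y^j ∂_j X^i. -/
def lie (X Y : VF) : VF := fun q => fderiv ℝ Y q (X q) - fderiv ℝ X q (Y q)

/-- Derivative of a function along a vector field: X(F). -/
def vderiv (X : VF) (F : Pt → ℝ) : Pt → ℝ := fun q => fderiv ℝ F q (X q)

/-- η¹ = (1/2) dx. -/
def η1 : Form1 := fun _ => (1/2, 0, 0)
/-- η² = (1/2)(dy − p dx). -/
def η2 : Form1 := fun q => (-q.2.2/2, 1/2, 0)
/-- η³ = (1/2)(dp − f dx). -/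
def η3 (f : Pt → ℝ) : Form1 := fun q => (-f q/2, 0, 1/2)

/-- ξ₁ = 2(∂x + p ∂y + f ∂p). -/
def ξ1 (f : Pt → ℝ) : VF := fun q => (2, 2 * q.2.2, 2 * f q)
/-- ξ₂ = 2 ∂y. -/
def ξ2 : VF := fun _ => (0, 2, 0)
/-- ξ₃ = 2 ∂p. -/
def ξ3 : VF := fun _ => (0, 0, 2)

/-- Pointwise value of the Riemannian metric g = η¹⊗η¹ + η²⊗η² + η³⊗η³. -/
def gVal (f : Pt → ℝ) (q : Pt) (v w : Pt) : ℝ :=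
  dot (η1 q) v * dot (η1 q) w + dot (η2 q) v * dot (η2 q) w +
    dot (η3 f q) v * dot (η3 f q) w

/-- The metric applied to vector fields. -/
def gMet (f : Pt → ℝ) (X Y : VF) : Pt → ℝ := fun q => gVal f q (X q) (Y q)

/-- The volume form vol_g = η¹ ∧ η² ∧ η³. -/
def volg (f : Pt → ℝ) : Form3 := w12 η1 (w11 η2 (η3 f))

/-- Pointwise action of the (1,1)-tensor φ = η³⊗ξ₁ − η¹⊗ξ₃. -/
def phiAt (f : Pt → ℝ) (q : Pt) (v : Pt) : Pt :=
  dot (η3 f q) v • ξ1 f q - dot (η1 q) v • ξ3 q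

/-- The tensor φ applied to a vector field. -/
def phi (f : Pt → ℝ) (X : VF) : VF := fun q => phiAt f q (X q)

/-- The Koszul expression, equal to 2·g(∇_X Y, Z) for the Levi-Civita connection ∇ of g. -/
def koszul (f : Pt → ℝ) (X Y Z : VF) : Pt → ℝ := fun q =>
  vderiv X (gMet f Y Z) q + vderiv Y (gMet f X Z) q - vderiv Z (gMet f X Y) q
    + gMet f (lie X Y) Z q - gMet f (lie X Z) Y q - gMet f (lie Y Z) X q

/-- The Levi-Civita connection of g, recovered from the Koszul formula through the
    g-orthonormal frame (ξ₁, ξ₂, ξ₃): ∇_X Y = Σ_k g(∇_X Y, ξ_k) ξ_k. -/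
def nabla (f : Pt → ℝ) (X Y : VF) : VF := fun q =>
  (koszul f X Y (ξ1 f) q / 2) • ξ1 f q + (koszul f X Y ξ2 q / 2) • ξ2 q
    + (koszul f X Y ξ3 q / 2) • ξ3 q

/-- The g-gradient of a function, through the g-orthonormal frame (ξ₁, ξ₂, ξ₃):
    ∇F = Σ_k (ξ_k F) ξ_k, the unique field with g(∇F, X) = dF(X). -/
def grad (f : Pt → ℝ) (F : Pt → ℝ) : VF := fun q =>
  vderiv (ξ1 f) F q • ξ1 f q + vderiv ξ2 F q • ξ2 q + vderiv ξ3 F q • ξ3 q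

/-- The cross product of g: the unique field with g(X ×_g Y, Z) = vol_g(X, Y, Z),
    recovered through the g-orthonormal frame (ξ₁, ξ₂, ξ₃). -/
def crossg (f : Pt → ℝ) (X Y : VF) : VF := fun q =>
  (volg f q * dot (cross (X q) (Y q)) (ξ1 f q)) • ξ1 f q
    + (volg f q * dot (cross (X q) (Y q)) (ξ2 q)) • ξ2 q
    + (volg f q * dot (cross (X q) (Y q)) (ξ3 q)) • ξ3 q


/-- Expansion of a continuous linear functional on the standard basis of Pt. -/
lemma clm_eval (L : Pt →L[ℝ] ℝ) (v : Pt) :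
    L v = v.1 * L (1,0,0) + v.2.1 * L (0,1,0) + v.2.2 * L (0,0,1) := by
  have h : v = v.1 • ((1:ℝ),(0:ℝ),(0:ℝ)) + v.2.1 • ((0:ℝ),(1:ℝ),(0:ℝ))
      + v.2.2 • ((0:ℝ),(0:ℝ),(1:ℝ)) := by simp [Prod.ext_iff]
  conv_lhs => rw [h]
  rw [map_add, map_add, map_smul, map_smul, map_smul]
  simp [smul_eq_mul]

lemma diff_fderiv (F : Pt → ℝ) (hF : ContDiff ℝ (⊤:ℕ∞) F) (q : Pt) :
    DifferentiableAt ℝ (fderiv ℝ F) q := by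
  have h2 : ((1:WithTop ℕ∞) + 1 : WithTop ℕ∞) ≤ ((⊤:ℕ∞) : WithTop ℕ∞) := by
    exact WithTop.coe_le_coe.mpr (le_top : ((1:ℕ∞) + 1) ≤ ⊤)
  exact ((hF.fderiv_right (m := 1) h2).differentiable one_ne_zero).differentiableAt

lemma diff_pd (F : Pt → ℝ) (hF : ContDiff ℝ (⊤:ℕ∞) F) (v : Pt) (q : Pt) :
    DifferentiableAt ℝ (fun r => fderiv ℝ F r v) q :=
  (diff_fderiv F hF q).clm_apply (differentiableAt_const v)

lemma pdy_fderiv_zero (F : Pt → ℝ) (hF : ContDiff ℝ (⊤:ℕ∞) F)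
    (h : ∀ q, fderiv ℝ F q ((0:ℝ),(1:ℝ),(0:ℝ)) = 0) (v : Pt) (q : Pt) :
    fderiv ℝ (fun r => fderiv ℝ F r v) q ((0:ℝ),(1:ℝ),(0:ℝ)) = 0 := by
  have hd : DifferentiableAt ℝ (fderiv ℝ F) q := diff_fderiv F hF q
  have h1 : fderiv ℝ (fun r => fderiv ℝ F r v) q ((0:ℝ),(1:ℝ),(0:ℝ))
      = fderiv ℝ (fderiv ℝ F) q ((0:ℝ),(1:ℝ),(0:ℝ)) v := by
    rw [fderiv_clm_apply hd (differentiableAt_const v)]; simp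
  have hsymm : IsSymmSndFDerivAt ℝ F q :=
    hF.contDiffAt.isSymmSndFDerivAt
      (by simpa using WithTop.coe_le_coe.mpr (le_top : (2:ℕ∞) ≤ ⊤))
  have h2 : fderiv ℝ (fderiv ℝ F) q v ((0:ℝ),(1:ℝ),(0:ℝ))
      = fderiv ℝ (fun r => fderiv ℝ F r ((0:ℝ),(1:ℝ),(0:ℝ))) q v := by
    rw [fderiv_clm_apply hd (differentiableAt_const _)]; simp
  have h3 : (fun r => fderiv ℝ F r ((0:ℝ),(1:ℝ),(0:ℝ))) = fun _ => (0:ℝ) := funext h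
  rw [h1, hsymm, h2, h3, fderiv_fun_const]; simp

lemma fderiv_H1 (q v : Pt) : fderiv ℝ (fun r : Pt => -r.2.2 / 2) q v = -v.2.2 / 2 := by
  set M : Pt →L[ℝ] ℝ := (-(1/2):ℝ) • ((ContinuousLinearMap.snd ℝ ℝ ℝ).comp
    (ContinuousLinearMap.snd ℝ ℝ (ℝ × ℝ))) with hM
  have h : (fun r : Pt => -r.2.2 / 2) = fun r => M r := by
    funext r; simp [hM]; ring
  rw [h, (M.hasFDerivAt (x := q)).fderiv, hM]
  simp; ring

/-- for f_y ≡ 0 and H = H(x,p) with ξ₁(H) nowhere zero, the vector field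
v = ξ₁(H) ξ₂ admits a compatible bi-Hamiltonian structure:
(i) v = ξ₃ ×_g ∇H;
(ii) v = (ξ₁(H) ξ₁) ×_g ∇H₁ with H₁ = −p/2 and ∇H₁ = −f ξ₁ − ξ₃;
(iii) the Poisson 1-forms η³ and η = ξ₁(H) η¹ satisfy η³∧dη³ = 0, η∧dη = 0 and the
compatibility condition (η³ + η) ∧ d(η³ + η) = 0. -/
theorem bi_hamiltonian_structure (f : Pt → ℝ) (hf : ContDiff ℝ (⊤ : ℕ∞) f)
    (hy : ∀ q, pdy f q = 0) (H : Pt → ℝ) (hH : ContDiff ℝ (⊤ : ℕ∞) H)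
    (hHy : ∀ q, pdy H q = 0) (hne : ∀ q, vderiv (ξ1 f) H q ≠ 0) :
    (∀ q, vderiv (ξ1 f) H q • ξ2 q = crossg f ξ3 (grad f H) q) ∧
    ((∀ q, grad f (fun r => -r.2.2 / 2) q = (-(f q)) • ξ1 f q - ξ3 q) ∧
      (∀ q, vderiv (ξ1 f) H q • ξ2 q
        = crossg f (fun r => vderiv (ξ1 f) H r • ξ1 f r)
            (grad f (fun r => -r.2.2 / 2)) q)) ∧
    ((∀ q, w12 (η3 f) (d1 (η3 f)) q = 0) ∧
      (∀ q, w12 (fun r => vderiv (ξ1 f) H r • η1 r)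
              (d1 (fun r => vderiv (ξ1 f) H r • η1 r)) q = 0) ∧
      (∀ q, w12 (fun r => η3 f r + vderiv (ξ1 f) H r • η1 r)
              (d1 (fun r => η3 f r + vderiv (ξ1 f) H r • η1 r)) q = 0)) := by
  refine ⟨?_, ⟨?_, ?_⟩, ?_, ?_, ?_⟩
  · -- (i)
    intro q
    obtain ⟨a, ha⟩ : ∃ a, fderiv ℝ H q ((1:ℝ),(0:ℝ),(0:ℝ)) = a := ⟨_, rfl⟩
    obtain ⟨c, hc⟩ : ∃ c, fderiv ℝ H q ((0:ℝ),(0:ℝ),(1:ℝ)) = c := ⟨_, rfl⟩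
    have key : ∀ v : Pt, fderiv ℝ H q v = v.1 * a + v.2.2 * c := by
      intro v
      rw [clm_eval, show fderiv ℝ H q ((0:ℝ),(1:ℝ),(0:ℝ)) = 0 from hHy q, ha, hc]
      ring
    simp only [crossg, grad, vderiv, volg, w12, w11, dot, cross, η1, η2, η3,
      ξ1, ξ2, ξ3, Prod.smul_mk, Prod.mk_add_mk, smul_eq_mul, key]
    simp only [Prod.mk.injEq]
    refine ⟨by ring, by ring, by ring⟩
  · -- (ii) a: grad H1
    intro q
    simp only [grad, vderiv, ξ1, ξ2, ξ3, fderiv_H1, Prod.smul_mk, Prod.mk_add_mk,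
      Prod.mk_sub_mk, smul_eq_mul, Prod.mk.injEq]
    refine ⟨by ring, by ring, by ring⟩
  · -- (ii) b
    intro q
    obtain ⟨a, ha⟩ : ∃ a, fderiv ℝ H q ((1:ℝ),(0:ℝ),(0:ℝ)) = a := ⟨_, rfl⟩
    obtain ⟨c, hc⟩ : ∃ c, fderiv ℝ H q ((0:ℝ),(0:ℝ),(1:ℝ)) = c := ⟨_, rfl⟩
    have key : ∀ v : Pt, fderiv ℝ H q v = v.1 * a + v.2.2 * c := by
      intro v
      rw [clm_eval, show fderiv ℝ H q ((0:ℝ),(1:ℝ),(0:ℝ)) = 0 from hHy q, ha, hc]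
      ring
    simp only [crossg, grad, vderiv, volg, w12, w11, dot, cross, η1, η2, η3,
      ξ1, ξ2, ξ3, fderiv_H1, Prod.smul_mk, Prod.mk_add_mk, smul_eq_mul, key]
    simp only [Prod.mk.injEq]
    refine ⟨by ring, by ring, by ring⟩
  · -- (iii) case η3
    intro q
    have hfq : DifferentiableAt ℝ f q :=
      hf.differentiable (by simpa using WithTop.coe_le_coe.mpr (le_top : (1:ℕ∞) ≤ ⊤)) q
    have c1 : (fun r => (η3 f r).1) = fun r => (-(1/2):ℝ) * f r := by
      funext r; show -f r / 2 = _; ring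
    have c2 : (fun r => (η3 f r).2.1) = fun _ : Pt => (0:ℝ) := rfl
    have c3 : (fun r => (η3 f r).2.2) = fun _ : Pt => (1/2:ℝ) := rfl
    have hd1 : fderiv ℝ (fun r => (-(1/2):ℝ) * f r) q ((0:ℝ),(1:ℝ),(0:ℝ)) = 0 := by
      rw [fderiv_const_mul hfq]
      simp [show fderiv ℝ f q ((0:ℝ),(1:ℝ),(0:ℝ)) = 0 from hy q]
    simp only [w12, d1, dot]
    rw [c1, c2, c3]
    simp only [pdy, pdx, pdp]
    rw [hd1]
    simp [η3]
  · -- (iii) case η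
    intro q
    have c2 : (fun r => (vderiv (ξ1 f) H r • η1 r).2.1) = fun _ : Pt => (0:ℝ) := by
      funext r; simp [η1]
    have c3 : (fun r => (vderiv (ξ1 f) H r • η1 r).2.2) = fun _ : Pt => (0:ℝ) := by
      funext r; simp [η1]
    simp only [w12, d1, dot]
    rw [c2, c3]
    simp [η1, pdy, pdx, pdp]
  · -- (iii) compatibility
    intro q
    have hfq : DifferentiableAt ℝ f q :=
      hf.differentiable (by simpa using WithTop.coe_le_coe.mpr (le_top : (1:ℕ∞) ≤ ⊤)) q
    have hHy' : ∀ r, fderiv ℝ H r ((0:ℝ),(1:ℝ),(0:ℝ)) = 0 := fun r => hHy r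
    set G : Pt → ℝ := fun r => (-(1/2):ℝ) * f r
      + (fderiv ℝ H r ((1:ℝ),(0:ℝ),(0:ℝ)) + f r * fderiv ℝ H r ((0:ℝ),(0:ℝ),(1:ℝ))) with hG
    have c1 : (fun r => (η3 f r + vderiv (ξ1 f) H r • η1 r).1) = G := by
      funext r
      show -f r / 2 + vderiv (ξ1 f) H r • ((1:ℝ)/2) = G r
      rw [hG]
      simp only [vderiv, ξ1, smul_eq_mul]
      rw [clm_eval, hHy' r]
      ring
    have c2 : (fun r => (η3 f r + vderiv (ξ1 f) H r • η1 r).2.1) = fun _ : Pt => (0:ℝ) := by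
      funext r; simp [η3, η1]
    have c3 : (fun r => (η3 f r + vderiv (ξ1 f) H r • η1 r).2.2) = fun _ : Pt => (1/2:ℝ) := by
      funext r; simp [η3, η1]
    have HfD : HasFDerivAt f (fderiv ℝ f q) q := hfq.hasFDerivAt
    have H1D : HasFDerivAt (fun r => fderiv ℝ H r ((1:ℝ),(0:ℝ),(0:ℝ)))
        (fderiv ℝ (fun r => fderiv ℝ H r ((1:ℝ),(0:ℝ),(0:ℝ))) q) q :=
      (diff_pd H hH _ q).hasFDerivAt
    have H3D : HasFDerivAt (fun r => fderiv ℝ H r ((0:ℝ),(0:ℝ),(1:ℝ)))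
        (fderiv ℝ (fun r => fderiv ℝ H r ((0:ℝ),(0:ℝ),(1:ℝ))) q) q :=
      (diff_pd H hH _ q).hasFDerivAt
    have hGD : HasFDerivAt G
        (((-(1/2):ℝ) • fderiv ℝ f q)
          + (fderiv ℝ (fun r => fderiv ℝ H r ((1:ℝ),(0:ℝ),(0:ℝ))) q
            + (f q • fderiv ℝ (fun r => fderiv ℝ H r ((0:ℝ),(0:ℝ),(1:ℝ))) q
              + fderiv ℝ H q ((0:ℝ),(0:ℝ),(1:ℝ)) • fderiv ℝ f q))) q :=
      (HfD.const_mul (-(1/2):ℝ)).add (H1D.add (HfD.mul H3D))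
    have hpdyG : fderiv ℝ G q ((0:ℝ),(1:ℝ),(0:ℝ)) = 0 := by
      rw [hGD.fderiv]
      simp only [ContinuousLinearMap.add_apply, ContinuousLinearMap.coe_smul',
        Pi.smul_apply, smul_eq_mul]
      rw [show fderiv ℝ f q ((0:ℝ),(1:ℝ),(0:ℝ)) = 0 from hy q, pdy_fderiv_zero H hH hHy' ((1:ℝ),(0:ℝ),(0:ℝ)) q,
        pdy_fderiv_zero H hH hHy' ((0:ℝ),(0:ℝ),(1:ℝ)) q]
      ring
    simp only [w12, d1, dot]
    rw [c1, c2, c3]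
    simp only [pdy, pdx, pdp]
    rw [hpdyG]
    simp [η3, η1]
end
end

section
/- Assume f_y ≡ 0. For the coframe (ϖ¹, ϖ²) = (η¹, η³) of the plane bundle D = ker η² spanned by ξ₁ and ξ₃, the connection form ω¹₂ = −2 f_p η³ satisfies the structure equations dϖ¹ = −ω¹₂ ∧ ϖ² and dϖ² = ω¹₂ ∧ ϖ¹, and its curvature is Ω¹₂ = d(ω¹₂) = −4 ∂_p( f_x + f f_p ) η¹ ∧ η³. -/
/-!
Concrete model of the geometry of a second order ODE  y'' = f(x, y, y')
on Σ = ℝ³ with coordinates (x, y, p):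

* a vector field is given by its components w.r.t. (∂x, ∂y, ∂p);
* a 1-form by its components w.r.t. (dx, dy, dp);
* a 2-form by its components w.r.t. (dy∧dp, dp∧dx, dx∧dy);
* a 3-form by its coefficient w.r.t. dx∧dy∧dp.
-/

noncomputable section

/-! Auxiliary calculus lemmas. -/

lemma one_le_inftop' : (1 : WithTop ℕ∞) ≤ ((⊤:ℕ∞) : WithTop ℕ∞) := by
  rw [show ((1:WithTop ℕ∞)) = ((1:ℕ∞) : WithTop ℕ∞) by norm_cast]
  exact WithTop.coe_le_coe.2 le_top

lemma smooth_fderiv' (F : Pt → ℝ) (hF : ContDiff ℝ (⊤ : ℕ∞) F) :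
    ContDiff ℝ (⊤ : ℕ∞) (fderiv ℝ F) :=
  hF.fderiv_right (m := (⊤ : ℕ∞)) (le_of_eq (by
    rw [show ((1:WithTop ℕ∞)) = ((1:ℕ∞) : WithTop ℕ∞) by norm_cast, ← WithTop.coe_add]
    norm_num))

lemma smooth_pd' (F : Pt → ℝ) (hF : ContDiff ℝ (⊤ : ℕ∞) F) (v : Pt) :
    ContDiff ℝ (⊤ : ℕ∞) (fun r => fderiv ℝ F r v) :=
  (smooth_fderiv' F hF).clm_apply contDiff_const

lemma pd_swap' (F : Pt → ℝ) (hF : ContDiff ℝ (⊤ : ℕ∞) F) (v w q : Pt) :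
    fderiv ℝ (fun r => fderiv ℝ F r v) q w = fderiv ℝ (fun r => fderiv ℝ F r w) q v := by
  have hd : DifferentiableAt ℝ (fderiv ℝ F) q :=
    (smooth_fderiv' F hF).differentiable (lt_of_lt_of_le zero_lt_one one_le_inftop').ne' q
  have h1 : ∀ u : Pt, fderiv ℝ (fun r => fderiv ℝ F r u) q
      = (fderiv ℝ (fderiv ℝ F) q).flip u := by
    intro u
    rw [fderiv_clm_apply hd (differentiableAt_const u)]
    simp
  have hs : IsSymmSndFDerivAt ℝ F q := by
    apply hF.contDiffAt.isSymmSndFDerivAt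
    rw [show ((2:WithTop ℕ∞)) = ((2:ℕ∞) : WithTop ℕ∞) by norm_cast]
    rw [minSmoothness_of_isRCLikeNormedField]
    exact WithTop.coe_le_coe.2 le_top
  rw [h1 v, h1 w]
  simpa using hs w v

lemma pd_mul' (F G : Pt → ℝ) (hF : Differentiable ℝ F) (hG : Differentiable ℝ G) (v q : Pt) :
    fderiv ℝ (fun r => F r * G r) q v
      = fderiv ℝ F q v * G q + F q * fderiv ℝ G q v := by
  rw [fderiv_fun_mul (hF q) (hG q)]
  simp [ContinuousLinearMap.add_apply, smul_eq_mul]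
  ring

lemma pd_add' (F G : Pt → ℝ) (hF : Differentiable ℝ F) (hG : Differentiable ℝ G) (v q : Pt) :
    fderiv ℝ (fun r => F r + G r) q v
      = fderiv ℝ F q v + fderiv ℝ G q v := by
  rw [fderiv_fun_add (hF q) (hG q)]; simp

lemma pd_cmul' (c : ℝ) (F : Pt → ℝ) (hF : Differentiable ℝ F) (v q : Pt) :
    fderiv ℝ (fun r => c * F r) q v = c * fderiv ℝ F q v := by
  rw [fderiv_const_mul (hF q)]; simp

/-- for f_y ≡ 0, the coframe (ϖ¹, ϖ²) = (η¹, η³) of the plane bundle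
D = ker η² and the connection form ω¹₂ = −2 f_p η³ satisfy dϖ¹ = −ω¹₂ ∧ ϖ² and
dϖ² = ω¹₂ ∧ ϖ¹, with curvature Ω¹₂ = dω¹₂ = −4 ∂_p(f_x + f f_p) η¹ ∧ η³. -/
theorem connection_on_contact_distribution (f : Pt → ℝ) (hf : ContDiff ℝ (⊤ : ℕ∞) f)
    (hy : ∀ q, pdy f q = 0) :
    (∀ q, d1 η1 q = -(w11 (fun r => (-(2 * pdp f r)) • η3 f r) (η3 f) q)) ∧
    (∀ q, d1 (η3 f) q = w11 (fun r => (-(2 * pdp f r)) • η3 f r) η1 q) ∧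
    (∀ q, d1 (fun r => (-(2 * pdp f r)) • η3 f r) q
      = (-4 * pdp (fun r => pdx f r + f r * pdp f r) q) • w11 η1 (η3 f) q) := by
  have hfd : Differentiable ℝ f := hf.differentiable (lt_of_lt_of_le zero_lt_one one_le_inftop').ne'
  have hps : ContDiff ℝ (⊤ : ℕ∞) (fun r => pdp f r) := smooth_pd' f hf (0,0,1)
  have hpd : Differentiable ℝ (fun r => pdp f r) := hps.differentiable (lt_of_lt_of_le zero_lt_one one_le_inftop').ne'
  have hxd : Differentiable ℝ (fun r => pdx f r) :=
    (smooth_pd' f hf (1,0,0)).differentiable (lt_of_lt_of_le zero_lt_one one_le_inftop').ne'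
  -- pdy (pdp f) = 0
  have hyp : ∀ q, pdy (fun r => pdp f r) q = 0 := by
    intro q
    have h := pd_swap' f hf (0,0,1) (0,1,0) q
    have h0 : (fun r => fderiv ℝ f r (0,1,0)) = fun _ => (0:ℝ) := funext hy
    simp only [pdy, pdp] at *
    rw [h, h0, fderiv_fun_const]
    simp
  -- pdx (pdp f) = pdp (pdx f)
  have hxp : ∀ q, pdx (fun r => pdp f r) q = pdp (fun r => pdx f r) q := by
    intro q
    simpa [pdx, pdp] using pd_swap' f hf (0,0,1) (1,0,0) q
  refine ⟨?_, ?_, ?_⟩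
  · intro q
    have e1 : d1 η1 q = (0,0,0) := by
      simp [d1, η1, pdx, pdy, pdp, fderiv_const]
    rw [e1]
    simp only [w11, η3, Prod.smul_mk, smul_eq_mul, cross]
    refine Prod.ext ?_ (Prod.ext ?_ ?_) <;> simp <;> ring
  · intro q
    have c1 : ∀ v, fderiv ℝ (fun r => -f r / 2) q v = -fderiv ℝ f q v / 2 := by
      intro v
      have : (fun r => -f r / 2) = fun r => (-(1:ℝ)/2) * f r := by funext r; ring
      rw [this, pd_cmul' _ f hfd v q]; ring
    simp only [d1, η3, w11, η1, cross, Prod.smul_mk, smul_eq_mul]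
    have hyf := hy q
    simp only [pdy, pdx, pdp] at hyf ⊢
    rw [c1, c1]
    refine Prod.ext ?_ (Prod.ext ?_ ?_) <;> simp [hyf] <;> ring
  · intro q
    -- components of ω = (-(2 f_p)) • η3
    have ew : (fun r => (-(2 * pdp f r)) • η3 f r)
        = fun r => (pdp f r * f r, 0, -(1:ℝ) * pdp f r) := by
      funext r
      simp only [η3, Prod.smul_mk, smul_eq_mul]
      refine Prod.ext ?_ (Prod.ext ?_ ?_) <;> simp <;> ring
    rw [ew]
    simp only [d1]
    have hcomp1 : ∀ v, fderiv ℝ (fun r => pdp f r * f r) q v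
        = fderiv ℝ (fun r => pdp f r) q v * f q + pdp f q * fderiv ℝ f q v :=
      fun v => pd_mul' _ f hpd hfd v q
    have hcomp3 : ∀ v, fderiv ℝ (fun r => -(1:ℝ) * pdp f r) q v
        = -(1:ℝ) * fderiv ℝ (fun r => pdp f r) q v :=
      fun v => pd_cmul' _ _ hpd v q
    -- RHS coefficient
    have hrhs : pdp (fun r => pdx f r + f r * pdp f r) q
        = pdp (fun r => pdx f r) q
          + (pdp f q * pdp f q + f q * pdp (fun r => pdp f r) q) := by
      have h1 : pdp (fun r => pdx f r + f r * pdp f r) q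
          = pdp (fun r => pdx f r) q + pdp (fun r => f r * pdp f r) q := by
        simpa [pdp] using pd_add' (fun r => pdx f r) (fun r => f r * pdp f r)
          hxd (hfd.mul hpd) (0,0,1) q
      have h2 : pdp (fun r => f r * pdp f r) q
          = pdp f q * pdp f q + f q * pdp (fun r => pdp f r) q := by
        simpa [pdp] using pd_mul' f (fun r => pdp f r) hfd hpd (0,0,1) q
      rw [h1, h2]
    have hy1 : pdy (fun r => pdp f r * f r) q = 0 := by
      have := hcomp1 (0,1,0)
      simp only [pdy, pdp] at *
      rw [this]
      have hyp' := hyp q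
      have hyf := hy q
      rw [hyp', hyf]; ring
    have hy3 : pdy (fun r => -(1:ℝ) * pdp f r) q = 0 := by
      have := hcomp3 (0,1,0)
      simp only [pdy, pdp] at *
      rw [this]
      have hyp' := hyp q
      rw [hyp']; ring
    have hx3 : pdx (fun r => -(1:ℝ) * pdp f r) q
        = -(1:ℝ) * pdp (fun r => pdx f r) q := by
      have := hcomp3 (1,0,0)
      have hxp' := hxp q
      simp only [pdx, pdp] at *
      rw [this, hxp']
    have hp1 : pdp (fun r => pdp f r * f r) q
        = pdp (fun r => pdp f r) q * f q + pdp f q * pdp f q := by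
      have := hcomp1 (0,0,1)
      simp only [pdp] at *
      rw [this]
    have hzero : ∀ v : Pt, fderiv ℝ (fun _ : Pt => (0:ℝ)) q v = 0 := by
      intro v; rw [fderiv_fun_const]; simp
    simp only [w11, η1, η3, cross, smul_eq_mul, Prod.smul_mk]
    simp only [pdx, pdy, pdp] at hy1 hy3 hx3 hp1 hrhs ⊢
    refine Prod.ext ?_ (Prod.ext ?_ ?_)
    · rw [hy3]; simp [fderiv_const]
    · rw [hp1, hx3, hrhs]; simp; ring
    · rw [hy1]; simp [fderiv_const]
end
end
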